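/- With the lexicographic monomial order determined by Z_N > Y_N > X_N > ... > Z_1 > Y_1 > X_1, for 1 ≤ i_1 < ... < i_t ≤ N with t ≥ 3, the polynomial G_{{i_1,...,i_t}} has the form X_{i_1} Y_{i_2} ··· Y_{i_{t-1}} Z_{i_t} - Y_{i_1} X_{i_2} Y_{i_3} ··· Y_{i_{t-1}} Z_{i_t} + (lower order terms); in particular its leading monomial is X_{i_1} Y_{i_2} ··· Y_{i_{t-1}} Z_{i_t}. -/

import Mathlib

variable (K : Type) [Field K] (N : ℕ)

/-- Xᵢ in S = K[X₁,Y₁,Z₁,…]: the variable X (i,0). -/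
noncomputable def XX (i : Fin N) : MvPolynomial (Fin N × Fin 3) K := MvPolynomial.X (i, 0)
/-- Yᵢ: the variable X (i,1). -/
noncomputable def YY (i : Fin N) : MvPolynomial (Fin N × Fin 3) K := MvPolynomial.X (i, 1)
/-- Zᵢ: the variable X (i,2). -/
noncomputable def ZZ (i : Fin N) : MvPolynomial (Fin N × Fin 3) K := MvPolynomial.X (i, 2)

/-- G_{i,j} = XᵢZⱼ - YᵢYⱼ + ZᵢXⱼ. -/
noncomputable def Gpair (i j : Fin N) : MvPolynomial (Fin N × Fin 3) K :=
  XX K N i * ZZ K N j - YY K N i * YY K N j + ZZ K N i * XX K N j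

/-- The family F_I, indexed by (sorted) lists: F_{i}=Xᵢ, F_{i,j}=XᵢYⱼ-XⱼYᵢ, and for t ≥ 3
F_{i₁,…,i_t} = F_{i₂,i₄,…,i_t} G_{i₁,i₃} - F_{i₁,i₄,…,i_t} G_{i₂,i₃}. -/
noncomputable def FF : List (Fin N) → MvPolynomial (Fin N × Fin 3) K
  | [] => 0
  | [i] => XX K N i
  | [i, j] => XX K N i * YY K N j - XX K N j * YY K N i
  | i1 :: i2 :: i3 :: rest =>
      FF (i2 :: rest) * Gpair K N i1 i3 - FF (i1 :: rest) * Gpair K N i2 i3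
termination_by l => l.length

/-- The family G_I: G_{i,j} as above, G_{i,j,k} the 3×3 determinant, and for t ≥ 4
G_{i₁,…,i_t} = G_{i₂,i₄,…,i_t} G_{i₁,i₃} - G_{i₁,i₄,…,i_t} G_{i₂,i₃}. -/
noncomputable def GG : List (Fin N) → MvPolynomial (Fin N × Fin 3) K
  | [] => 0
  | [_] => 0
  | [i, j] => Gpair K N i j
  | [i, j, k] =>
      Matrix.det !![XX K N i, YY K N i, ZZ K N i;
                    XX K N j, YY K N j, ZZ K N j;
                    XX K N k, YY K N k, ZZ K N k]
  | i1 :: i2 :: i3 :: i4 :: rest =>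
      GG (i2 :: i4 :: rest) * Gpair K N i1 i3 - GG (i1 :: i4 :: rest) * Gpair K N i2 i3
termination_by l => l.length

/-- Rank of a variable in the order Z_N > Y_N > X_N > ⋯ > Z₁ > Y₁ > X₁:
higher rank = larger variable (coordinate 0 = X, 1 = Y, 2 = Z). -/
def rankVar {N : ℕ} (v : Fin N × Fin 3) : ℕ := 3 * (v.1 : ℕ) + (v.2 : ℕ)

/-- Lexicographic comparison of monomials (exponent vectors) for this variable order:
m is lower order than m' iff at the largest variable where they differ, m has the
smaller exponent. -/
def monLT {N : ℕ} (m m' : (Fin N × Fin 3) →₀ ℕ) : Prop :=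
  ∃ v : Fin N × Fin 3, m v < m' v ∧ ∀ w : Fin N × Fin 3, rankVar v < rankVar w → m w = m' w

/-- The exponent vector of the monomial Y_{i₁} ⋯ Y_{i_t} for a list of indices. -/
noncomputable def Ymon {N : ℕ} (l : List (Fin N)) : (Fin N × Fin 3) →₀ ℕ :=
  (l.map (fun i => Finsupp.single ((i, 1) : Fin N × Fin 3) 1)).sum


open MvPolynomial Finsupp List

section Infra

lemma rankVar_inj {N : ℕ} {v w : Fin N × Fin 3} (h : rankVar v = rankVar w) : v = w := by
  unfold rankVar at h
  have h2 := v.2.isLt; have h3 := w.2.isLt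
  have : (v.1 : ℕ) = w.1 ∧ (v.2 : ℕ) = w.2 := by omega
  exact Prod.ext (Fin.ext this.1) (Fin.ext this.2)

lemma monLT_trans {N : ℕ} {m1 m2 m3 : (Fin N × Fin 3) →₀ ℕ}
    (h : monLT m1 m2) (h' : monLT m2 m3) : monLT m1 m3 := by
  obtain ⟨v, hv, hw⟩ := h; obtain ⟨v', hv', hw'⟩ := h'
  rcases lt_trichotomy (rankVar v) (rankVar v') with hlt | heq | hgt
  · exact ⟨v', by rw [hw v' hlt]; exact hv',
      fun w hww => by rw [hw w (hlt.trans hww), hw' w hww]⟩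
  · obtain rfl := rankVar_inj heq
    exact ⟨v, hv.trans hv', fun w hww => by rw [hw w hww, hw' w hww]⟩
  · exact ⟨v, by rw [← hw' v hgt]; exact hv,
      fun w hww => by rw [hw w hww, hw' w (hgt.trans hww)]⟩

lemma monLT_irrefl {N : ℕ} {m : (Fin N × Fin 3) →₀ ℕ} (h : monLT m m) : False := by
  obtain ⟨v, hv, _⟩ := h; exact lt_irrefl _ hv

lemma monLT_ne {N : ℕ} {m m' : (Fin N × Fin 3) →₀ ℕ} (h : monLT m m') : m ≠ m' := by
  rintro rfl; exact monLT_irrefl h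

lemma monLT_add_right {N : ℕ} {u u' : (Fin N × Fin 3) →₀ ℕ} (h : monLT u u')
    (e : (Fin N × Fin 3) →₀ ℕ) : monLT (u + e) (u' + e) := by
  obtain ⟨v, h1, h2⟩ := h
  exact ⟨v, by simp only [Finsupp.add_apply]; omega,
    fun w hw => by simp [Finsupp.add_apply, h2 w hw]⟩

lemma monLT_of_witness {N : ℕ} {u T : (Fin N × Fin 3) →₀ ℕ} (i : Fin N) (j : Fin 3)
    (h : u (i, j) < T (i, j))
    (h2 : ∀ j' : Fin 3, (j : ℕ) < (j' : ℕ) → u (i, j') = T (i, j'))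
    (h3 : ∀ w : Fin N × Fin 3, (i : ℕ) < (w.1 : ℕ) → u w = T w) : monLT u T := by
  refine ⟨(i, j), h, fun w hw => ?_⟩
  simp only [rankVar] at hw
  rcases lt_trichotomy ((w.1 : ℕ)) ((i : ℕ)) with h' | h' | h'
  · exfalso; have := w.2.isLt; omega
  · have hwi : w.1 = i := Fin.ext h'
    have hj : (j : ℕ) < (w.2 : ℕ) := by omega
    rw [show w = (i, w.2) from Prod.ext hwi rfl]
    exact h2 w.2 hj
  · exact h3 w h'

lemma Ymon_nil {N : ℕ} : Ymon ([] : List (Fin N)) = 0 := rfl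

lemma Ymon_cons {N : ℕ} (x : Fin N) (l : List (Fin N)) :
    Ymon (x :: l) = Finsupp.single (x, 1) 1 + Ymon l := by simp [Ymon]

lemma Ymon_apply {N : ℕ} (l : List (Fin N)) (v : Fin N × Fin 3) :
    Ymon l v = if v.2 = 1 then l.count v.1 else 0 := by
  induction l with
  | nil => simp [Ymon]
  | cons x l ih =>
    rw [Ymon_cons, Finsupp.add_apply, ih, Finsupp.single_apply]
    obtain ⟨a, j⟩ := v
    simp only [Prod.mk.injEq, List.count_cons]
    rcases eq_or_ne j 1 with rfl | hj
    · rcases eq_or_ne x a with rfl | hx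
      · simp [beq_iff_eq]; omega
      · simp [beq_iff_eq, hx, Ne.symm hx]
    · simp [hj, Ne.symm hj]

def degAt {N : ℕ} (m : (Fin N × Fin 3) →₀ ℕ) (x : Fin N) : ℕ := m (x, 0) + m (x, 1) + m (x, 2)

lemma degAt_add {N : ℕ} (u v : (Fin N × Fin 3) →₀ ℕ) (x : Fin N) :
    degAt (u + v) x = degAt u x + degAt v x := by
  simp [degAt, Finsupp.add_apply]; ring

lemma degAt_single {N : ℕ} (i : Fin N) (j : Fin 3) (x : Fin N) :
    degAt (Finsupp.single (i, j) 1) x = if x = i then 1 else 0 := by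
  fin_cases j <;> simp [degAt, Finsupp.single_apply, Prod.mk.injEq, eq_comm]

lemma degAt_Ymon {N : ℕ} (l : List (Fin N)) (x : Fin N) :
    degAt (Ymon l) x = l.count x := by
  simp [degAt, Ymon_apply]

lemma single_apply_fst_ne {N : ℕ} {i : Fin N} {j : Fin 3} {w : Fin N × Fin 3} (h : w.1 ≠ i) :
    Finsupp.single (i, j) (1 : ℕ) w = 0 := by
  rw [Finsupp.single_apply, if_neg]
  rintro rfl; exact h rfl

lemma Ymon_apply_not_mem {N : ℕ} {l : List (Fin N)} {w : Fin N × Fin 3} (h : w.1 ∉ l) :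
    Ymon l w = 0 := by
  rw [Ymon_apply]
  split_ifs with h1
  · simp [List.count_eq_zero.2 h]
  · rfl

noncomputable def leadE {N : ℕ} (h : Fin N) (mid : List (Fin N)) (lst : Fin N) :
    (Fin N × Fin 3) →₀ ℕ :=
  Finsupp.single (h, 0) 1 + Ymon mid + Finsupp.single (lst, 2) 1

noncomputable def mon2E {N : ℕ} (a c : Fin N) (mid : List (Fin N)) (b : Fin N) :
    (Fin N × Fin 3) →₀ ℕ :=
  Finsupp.single ((a, 1) : Fin N × Fin 3) 1 + Finsupp.single ((c, 0) : Fin N × Fin 3) 1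
    + Ymon mid + Finsupp.single ((b, 2) : Fin N × Fin 3) 1

end Infra

section Poly

lemma X_mul_X (K : Type) [Field K] (N : ℕ) (u v : Fin N × Fin 3) :
    (X u : MvPolynomial (Fin N × Fin 3) K) * X v
      = monomial (Finsupp.single u 1 + Finsupp.single v 1) 1 := by
  simp [X, monomial_mul]

lemma X_mul_X_mul_X (K : Type) [Field K] (N : ℕ) (u v w : Fin N × Fin 3) :
    (X u : MvPolynomial (Fin N × Fin 3) K) * X v * X w
      = monomial (Finsupp.single u 1 + Finsupp.single v 1 + Finsupp.single w 1) 1 := by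
  simp [X, monomial_mul]

lemma Gpair_eq (K : Type) [Field K] (N : ℕ) (i j : Fin N) :
    Gpair K N i j
      = monomial (Finsupp.single (i,0) 1 + Finsupp.single (j,2) 1) (1 : K)
        - monomial (Finsupp.single (i,1) 1 + Finsupp.single (j,1) 1) 1
        + monomial (Finsupp.single (i,2) 1 + Finsupp.single (j,0) 1) 1 := by
  simp [Gpair, XX, YY, ZZ, X_mul_X]

def Good (K : Type) [Field K] (N : ℕ) (h : Fin N) (mid : List (Fin N)) (lst : Fin N)
    (G : MvPolynomial (Fin N × Fin 3) K) : Prop :=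
  MvPolynomial.coeff (leadE h mid lst) G = 1 ∧
  (∀ m ∈ G.support, ∀ x : Fin N, degAt m x = List.count x (h :: (mid ++ [lst]))) ∧
  (∀ m ∈ G.support, m ≠ leadE h mid lst → monLT m (leadE h mid lst))

end Poly

section PairSec

lemma fne {N : ℕ} {u v : (Fin N × Fin 3) →₀ ℕ} (w : Fin N × Fin 3) (h : u w ≠ v w) : u ≠ v :=
  fun he => h (by rw [he])

lemma not_le_at {N : ℕ} {u v : (Fin N × Fin 3) →₀ ℕ} (w : Fin N × Fin 3) (h : ¬ u w ≤ v w) :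
    ¬ u ≤ v := fun hle => h (Finsupp.le_def.1 hle w)

lemma coeff_mul_Gpair (K : Type) [Field K] (N : ℕ) (P : MvPolynomial (Fin N × Fin 3) K)
    (i j : Fin N) (m : (Fin N × Fin 3) →₀ ℕ) :
    MvPolynomial.coeff m (P * Gpair K N i j)
      = (if Finsupp.single (i,0) 1 + Finsupp.single (j,2) 1 ≤ m
          then MvPolynomial.coeff (m - (Finsupp.single (i,0) 1 + Finsupp.single (j,2) 1)) P else 0)
      - (if Finsupp.single (i,1) 1 + Finsupp.single (j,1) 1 ≤ m
          then MvPolynomial.coeff (m - (Finsupp.single (i,1) 1 + Finsupp.single (j,1) 1)) P else 0)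
      + (if Finsupp.single (i,2) 1 + Finsupp.single (j,0) 1 ≤ m
          then MvPolynomial.coeff (m - (Finsupp.single (i,2) 1 + Finsupp.single (j,0) 1)) P else 0) := by
  rw [Gpair_eq, mul_add, mul_sub]
  simp only [coeff_add, coeff_sub, coeff_mul_monomial', mul_one]

lemma support_Gpair (K : Type) [Field K] (N : ℕ) (i j : Fin N) :
    (Gpair K N i j).support ⊆
      ({Finsupp.single (i,0) 1 + Finsupp.single (j,2) 1,
        Finsupp.single (i,1) 1 + Finsupp.single (j,1) 1,
        Finsupp.single (i,2) 1 + Finsupp.single (j,0) 1} : Finset ((Fin N × Fin 3) →₀ ℕ)) := by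
  rw [Gpair_eq]
  intro s hs
  simp only [Finset.mem_insert, Finset.mem_singleton]
  rcases Finset.mem_union.1 (MvPolynomial.support_add hs) with h | h
  · rcases Finset.mem_union.1 (MvPolynomial.support_sub _ _ _ h) with h' | h'
    · left
      have h2 := h'
      rw [eq_comm]
      simpa using h2
    · right; left
      have h2 := h'
      rw [eq_comm]
      simpa using h2
  · right; right
    have h2 := h
    rw [eq_comm]
    simpa using h2

lemma support_mul_Gpair (K : Type) [Field K] (N : ℕ) (P : MvPolynomial (Fin N × Fin 3) K)
    (i j : Fin N) :
    ∀ m ∈ (P * Gpair K N i j).support, ∃ mP ∈ P.support,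
      m = mP + (Finsupp.single (i,0) 1 + Finsupp.single (j,2) 1)
      ∨ m = mP + (Finsupp.single (i,1) 1 + Finsupp.single (j,1) 1)
      ∨ m = mP + (Finsupp.single (i,2) 1 + Finsupp.single (j,0) 1) := by
  intro m hm
  have h1 := MvPolynomial.support_mul P (Gpair K N i j) hm
  rw [Finset.mem_add] at h1
  obtain ⟨y, hy, z, hz, rfl⟩ := h1
  have hz2 := support_Gpair K N i j hz
  simp only [Finset.mem_insert, Finset.mem_singleton] at hz2
  exact ⟨y, hy, by rcases hz2 with rfl | rfl | rfl <;> simp⟩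

lemma lead_pair {N : ℕ} (i j : Fin N) :
    leadE i [] j = Finsupp.single (i,0) 1 + Finsupp.single (j,2) 1 := by
  simp [leadE, Ymon_nil]

lemma Good_pair (K : Type) [Field K] (N : ℕ) (i j : Fin N) (hij : i < j) :
    Good K N i [] j (Gpair K N i j) := by
  have hvij : (i : ℕ) < (j : ℕ) := hij
  have hij' : i ≠ j := ne_of_lt hij
  have hji : j ≠ i := (ne_of_lt hij).symm
  refine ⟨?_, ?_, ?_⟩
  · rw [Gpair_eq, lead_pair]
    simp only [coeff_add, coeff_sub, coeff_monomial]
    rw [if_neg (fne (i,0) ?_), if_neg (fne (i,0) ?_)]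
    · simp
    · simp [Finsupp.add_apply, Finsupp.single_apply, hji]
    · simp [Finsupp.add_apply, Finsupp.single_apply, hji]
  · intro m hm x
    have h2 := support_Gpair K N i j hm
    simp only [Finset.mem_insert, Finset.mem_singleton] at h2
    rcases h2 with rfl | rfl | rfl <;>
      · rw [degAt_add, degAt_single, degAt_single]
        simp only [List.nil_append, List.count_cons, List.count_nil, beq_iff_eq]
        split_ifs <;> omega
  · intro m hm hne
    rw [lead_pair] at hne ⊢
    have h2 := support_Gpair K N i j hm
    simp only [Finset.mem_insert, Finset.mem_singleton] at h2
    rcases h2 with rfl | rfl | rfl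
    · exact absurd rfl hne
    · refine monLT_of_witness j 2 ?_ ?_ ?_
      · simp [Finsupp.add_apply, Finsupp.single_apply, hij']
      · intro j' hj'; exact absurd j'.isLt (by omega)
      · intro w hw
        have hwne1 : w.1 ≠ i := Fin.ne_of_val_ne (by omega)
        have hwne2 : w.1 ≠ j := Fin.ne_of_val_ne (by omega)
        simp [Finsupp.add_apply, single_apply_fst_ne, hwne1, hwne2]
    · refine monLT_of_witness j 2 ?_ ?_ ?_
      · simp [Finsupp.add_apply, Finsupp.single_apply, hij', hji]
      · intro j' hj'; exact absurd j'.isLt (by omega)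
      · intro w hw
        have hwne1 : w.1 ≠ i := Fin.ne_of_val_ne (by omega)
        have hwne2 : w.1 ≠ j := Fin.ne_of_val_ne (by omega)
        simp [Finsupp.add_apply, single_apply_fst_ne, hwne1, hwne2]

end PairSec

section DetSec

lemma mon2_lt_lead {N : ℕ} (a c b : Fin N) (mid : List (Fin N))
    (hac : a < c) (hcmid : ∀ x ∈ mid, c < x) (hcb : c < b) :
    monLT (mon2E a c mid b) (leadE a (c :: mid) b) := by
  have hac' : a ≠ c := ne_of_lt hac
  have hcb' : c ≠ b := ne_of_lt hcb
  have hcmem : c ∉ mid := fun h => lt_irrefl c (hcmid c h)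
  refine monLT_of_witness c 1 ?_ ?_ ?_
  · simp [mon2E, leadE, Ymon_cons, Finsupp.add_apply, Finsupp.single_apply,
      Ymon_apply, hac', Ne.symm hcb', List.count_eq_zero.2 hcmem]
  · intro j' hj'
    have hj2 : j' = 2 := by
      have := j'.isLt; exact Fin.ext (by omega)
    subst hj2
    simp [mon2E, leadE, Ymon_cons, Finsupp.add_apply, Finsupp.single_apply,
      Ymon_apply, hac', Ne.symm hcb']
  · intro w hw
    have hwa : w.1 ≠ a := Fin.ne_of_val_ne (by have : (a:ℕ) < c := hac; omega)
    have hwc : w.1 ≠ c := Fin.ne_of_val_ne (by omega)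
    simp [mon2E, leadE, Ymon_cons, Finsupp.add_apply,
      single_apply_fst_ne hwa, single_apply_fst_ne hwc]

lemma good3_of {K : Type} [Field K] {N : ℕ} {G : MvPolynomial (Fin N × Fin 3) K}
    {lead mon2 : (Fin N × Fin 3) →₀ ℕ} (hlt : monLT mon2 lead)
    (h4 : ∀ m ∈ G.support, m ≠ lead → m ≠ mon2 → monLT m mon2) :
    ∀ m ∈ G.support, m ≠ lead → monLT m lead := by
  intro m hm hne
  rcases eq_or_ne m mon2 with rfl | hne2
  · exact hlt
  · exact monLT_trans (h4 m hm hne hne2) hlt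

lemma GG_three (K : Type) [Field K] (N : ℕ) (a c b : Fin N) :
    GG K N [a, c, b]
      = monomial (Finsupp.single (a,0) 1 + Finsupp.single (c,1) 1 + Finsupp.single (b,2) 1) (1:K)
      - monomial (Finsupp.single (a,0) 1 + Finsupp.single (c,2) 1 + Finsupp.single (b,1) 1) 1
      - monomial (Finsupp.single (a,1) 1 + Finsupp.single (c,0) 1 + Finsupp.single (b,2) 1) 1
      + monomial (Finsupp.single (a,1) 1 + Finsupp.single (c,2) 1 + Finsupp.single (b,0) 1) 1
      + monomial (Finsupp.single (a,2) 1 + Finsupp.single (c,0) 1 + Finsupp.single (b,1) 1) 1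
      - monomial (Finsupp.single (a,2) 1 + Finsupp.single (c,1) 1 + Finsupp.single (b,0) 1) 1 := by
  rw [show GG K N [a, c, b] = Matrix.det !![XX K N a, YY K N a, ZZ K N a;
        XX K N c, YY K N c, ZZ K N c;
        XX K N b, YY K N b, ZZ K N b] from by simp [GG]]
  rw [Matrix.det_fin_three]
  norm_num [Matrix.cons_val_zero, Matrix.cons_val_one, Matrix.head_cons, Matrix.cons_val_two,
    Matrix.tail_cons, XX, YY, ZZ]
  rw [X_mul_X_mul_X, X_mul_X_mul_X, X_mul_X_mul_X, X_mul_X_mul_X, X_mul_X_mul_X, X_mul_X_mul_X]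

end DetSec

section BaseSec

variable {K : Type} [Field K] {N : ℕ}

lemma GG_three_support (a c b : Fin N) :
    ∀ m ∈ (GG K N [a, c, b]).support,
      m = Finsupp.single (a,0) 1 + Finsupp.single (c,1) 1 + Finsupp.single (b,2) 1
      ∨ m = Finsupp.single (a,0) 1 + Finsupp.single (c,2) 1 + Finsupp.single (b,1) 1
      ∨ m = Finsupp.single (a,1) 1 + Finsupp.single (c,0) 1 + Finsupp.single (b,2) 1
      ∨ m = Finsupp.single (a,1) 1 + Finsupp.single (c,2) 1 + Finsupp.single (b,0) 1
      ∨ m = Finsupp.single (a,2) 1 + Finsupp.single (c,0) 1 + Finsupp.single (b,1) 1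
      ∨ m = Finsupp.single (a,2) 1 + Finsupp.single (c,1) 1 + Finsupp.single (b,0) 1 := by
  intro m hm
  rw [GG_three] at hm
  by_contra hc
  push_neg at hc
  obtain ⟨h1, h2, h3, h4, h5, h6⟩ := hc
  rw [MvPolynomial.mem_support_iff] at hm
  apply hm
  simp [coeff_sub, coeff_add, coeff_monomial, Ne.symm h1, Ne.symm h2, Ne.symm h3,
    Ne.symm h4, Ne.symm h5, Ne.symm h6]

lemma degAt_triple (a c b x : Fin N) (j1 j2 j3 : Fin 3) :
    degAt (Finsupp.single (a,j1) 1 + Finsupp.single (c,j2) 1 + Finsupp.single (b,j3) 1) x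
      = List.count x [a, c, b] := by
  rw [degAt_add, degAt_add, degAt_single, degAt_single, degAt_single]
  simp only [List.count_cons, List.count_nil, beq_iff_eq]
  split_ifs <;> omega

lemma CL_base (a c b : Fin N) (hch : List.Chain' (· < ·) [a, c, b]) :
    Good K N a [c] b (GG K N [a, c, b]) ∧
    MvPolynomial.coeff (mon2E a c [] b) (GG K N [a, c, b]) = -1 ∧
    ∀ m ∈ (GG K N [a, c, b]).support,
      m ≠ leadE a [c] b → m ≠ mon2E a c [] b → monLT m (mon2E a c [] b) := by
  have hac : a < c := (List.isChain_cons_cons.1 hch).1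
  have hcb : c < b := (List.isChain_cons_cons.1 (List.isChain_cons_cons.1 hch).2).1
  have hab : a < b := hac.trans hcb
  have hac' : a ≠ c := ne_of_lt hac
  have hca' : c ≠ a := Ne.symm hac'
  have hcb' : c ≠ b := ne_of_lt hcb
  have hbc' : b ≠ c := Ne.symm hcb'
  have hab' : a ≠ b := ne_of_lt hab
  have hba' : b ≠ a := Ne.symm hab'
  have hlead : leadE a [c] b
      = Finsupp.single (a,0) 1 + Finsupp.single (c,1) 1 + Finsupp.single (b,2) 1 := by
    simp [leadE, Ymon_cons, Ymon_nil]
  have hmon2 : mon2E a c [] b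
      = Finsupp.single (a,1) 1 + Finsupp.single (c,0) 1 + Finsupp.single (b,2) 1 := by
    simp [mon2E, Ymon_nil]
  have hsupp := GG_three_support (K := K) a c b
  have hlt := mon2_lt_lead a c b [] hac (by simp) hcb
  have h4 : ∀ m ∈ (GG K N [a, c, b]).support,
      m ≠ leadE a [c] b → m ≠ mon2E a c [] b → monLT m (mon2E a c [] b) := by
    intro m hm hne1 hne2
    rw [hlead] at hne1; rw [hmon2] at hne2 ⊢
    rcases hsupp m hm with rfl | rfl | rfl | rfl | rfl | rfl
    · exact absurd rfl hne1
    · refine monLT_of_witness b 2 ?_ ?_ ?_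
      · simp [Finsupp.add_apply, Finsupp.single_apply, hcb', hab']
      · intro j' hj'; exact absurd j'.isLt (by omega)
      · intro w hw
        have hwa : w.1 ≠ a := Fin.ne_of_val_ne (by have h := Fin.lt_def.1 hab; omega)
        have hwc : w.1 ≠ c := Fin.ne_of_val_ne (by have h := Fin.lt_def.1 hcb; omega)
        have hwb : w.1 ≠ b := Fin.ne_of_val_ne (by omega)
        simp [Finsupp.add_apply, single_apply_fst_ne, hwa, hwc, hwb]
    · exact absurd rfl hne2
    · refine monLT_of_witness b 2 ?_ ?_ ?_
      · simp [Finsupp.add_apply, Finsupp.single_apply, hcb', hab']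
      · intro j' hj'; exact absurd j'.isLt (by omega)
      · intro w hw
        have hwa : w.1 ≠ a := Fin.ne_of_val_ne (by have h := Fin.lt_def.1 hab; omega)
        have hwc : w.1 ≠ c := Fin.ne_of_val_ne (by have h := Fin.lt_def.1 hcb; omega)
        have hwb : w.1 ≠ b := Fin.ne_of_val_ne (by omega)
        simp [Finsupp.add_apply, single_apply_fst_ne, hwa, hwc, hwb]
    · refine monLT_of_witness b 2 ?_ ?_ ?_
      · simp [Finsupp.add_apply, Finsupp.single_apply, hcb', hab']
      · intro j' hj'; exact absurd j'.isLt (by omega)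
      · intro w hw
        have hwa : w.1 ≠ a := Fin.ne_of_val_ne (by have h := Fin.lt_def.1 hab; omega)
        have hwc : w.1 ≠ c := Fin.ne_of_val_ne (by have h := Fin.lt_def.1 hcb; omega)
        have hwb : w.1 ≠ b := Fin.ne_of_val_ne (by omega)
        simp [Finsupp.add_apply, single_apply_fst_ne, hwa, hwc, hwb]
    · refine monLT_of_witness b 2 ?_ ?_ ?_
      · simp [Finsupp.add_apply, Finsupp.single_apply, hcb', hab']
      · intro j' hj'; exact absurd j'.isLt (by omega)
      · intro w hw
        have hwa : w.1 ≠ a := Fin.ne_of_val_ne (by have h := Fin.lt_def.1 hab; omega)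
        have hwc : w.1 ≠ c := Fin.ne_of_val_ne (by have h := Fin.lt_def.1 hcb; omega)
        have hwb : w.1 ≠ b := Fin.ne_of_val_ne (by omega)
        simp [Finsupp.add_apply, single_apply_fst_ne, hwa, hwc, hwb]
  refine ⟨⟨?_, ?_, good3_of hlt h4⟩, ?_, h4⟩
  · rw [hlead, GG_three]
    simp only [coeff_sub, coeff_add, coeff_monomial]
    rw [if_neg (fne (b,2) (by simp [Finsupp.add_apply, Finsupp.single_apply, hcb'])),
      if_neg (fne (a,0) (by simp [Finsupp.add_apply, Finsupp.single_apply, hca'])),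
      if_neg (fne (a,0) (by simp [Finsupp.add_apply, Finsupp.single_apply, hba'])),
      if_neg (fne (a,0) (by simp [Finsupp.add_apply, Finsupp.single_apply, hca'])),
      if_neg (fne (a,0) (by simp [Finsupp.add_apply, Finsupp.single_apply, hba']))]
    simp
  · intro m hm x
    rcases hsupp m hm with rfl | rfl | rfl | rfl | rfl | rfl <;>
      (rw [degAt_triple a c b x]; rfl)
  · rw [hmon2, GG_three]
    simp only [coeff_sub, coeff_add, coeff_monomial]
    rw [if_neg (fne (a,0) (by simp [Finsupp.add_apply, Finsupp.single_apply, hca', hba'])),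
      if_neg (fne (a,0) (by simp [Finsupp.add_apply, Finsupp.single_apply, hca', hba'])),
      if_neg (fne (b,2) (by simp [Finsupp.add_apply, Finsupp.single_apply, hcb'])),
      if_neg (fne (a,1) (by simp [Finsupp.add_apply, Finsupp.single_apply, hba'])),
      if_neg (fne (a,1) (by simp [Finsupp.add_apply, Finsupp.single_apply, hca']))]
    simp

section StepSec

variable {K : Type} [Field K] {N : ℕ}

lemma good_witness {h lst : Fin N} {mid : List (Fin N)} {u : (Fin N × Fin 3) →₀ ℕ}
    (hmem : h ∉ mid) (hlst : h ≠ lst) (hdeg : degAt u h = 1)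
    (hu : monLT u (leadE h mid lst)) :
    ∃ v : Fin N × Fin 3, u v < leadE h mid lst v ∧
      (∀ w, rankVar v < rankVar w → u w = leadE h mid lst w) ∧
      (v.1 ∈ mid ∨ v.1 = lst) := by
  obtain ⟨v, h1, h2⟩ := hu
  by_cases hv : v.1 ∈ mid ∨ v.1 = lst
  · exact ⟨v, h1, h2, hv⟩
  push_neg at hv
  exfalso
  have hY : Ymon mid v = 0 := Ymon_apply_not_mem hv.1
  have hL : Finsupp.single (lst, 2) (1:ℕ) v = 0 := single_apply_fst_ne hv.2
  have hlead : leadE h mid lst v = Finsupp.single (h,0) 1 v := by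
    simp [leadE, Finsupp.add_apply, hY, hL]
  have hv0 : v = (h, 0) := by
    by_contra hne
    rw [hlead, Finsupp.single_apply, if_neg (fun hh => hne hh.symm)] at h1
    omega
  subst hv0
  have h10 : u (h, 0) = 0 := by
    rw [hlead, Finsupp.single_apply, if_pos rfl] at h1
    omega
  have h11 : u (h, 1) = 0 := by
    rw [h2 (h, 1) (by simp [rankVar])]
    simp [leadE, Finsupp.add_apply, Finsupp.single_apply, Ymon_apply,
      List.count_eq_zero.2 hmem, Ne.symm hlst]
  have h12 : u (h, 2) = 0 := by
    rw [h2 (h, 2) (by simp [rankVar])]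
    simp [leadE, Finsupp.add_apply, Finsupp.single_apply, Ymon_apply, Ne.symm hlst]
  rw [degAt, h10, h11, h12] at hdeg
  omega

lemma monLT_high (m0 : Fin N) {u S e T : (Fin N × Fin 3) →₀ ℕ} (v : Fin N × Fin 3)
    (h1 : u v < S v) (h2 : ∀ w, rankVar v < rankVar w → u w = S w)
    (hv : (m0 : ℕ) < (v.1 : ℕ))
    (he : ∀ w : Fin N × Fin 3, (m0 : ℕ) < (w.1 : ℕ) → e w = 0)
    (hST : ∀ w : Fin N × Fin 3, (m0 : ℕ) < (w.1 : ℕ) → S w = T w) :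
    monLT (u + e) T := by
  refine ⟨v, ?_, fun w hw => ?_⟩
  · rw [Finsupp.add_apply, he v hv, add_zero, ← hST v hv]
    exact h1
  · have hwm : (m0 : ℕ) < (w.1 : ℕ) := by
      simp only [rankVar] at hw
      have := w.2.isLt; have := v.2.isLt
      omega
    rw [Finsupp.add_apply, he w hwm, add_zero, h2 w hw, hST w hwm]

lemma monLT_at_m0 (m0 : Fin N) {u T : (Fin N × Fin 3) →₀ ℕ}
    (h1 : u (m0, 1) = 0) (hT : T (m0, 1) = 1) (h2 : u (m0, 2) = T (m0, 2))
    (hh : ∀ w : Fin N × Fin 3, (m0 : ℕ) < (w.1 : ℕ) → u w = T w) : monLT u T := by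
  refine monLT_of_witness m0 1 (by rw [h1, hT]; omega) ?_ hh
  intro j' hj'
  have hj2 : j' = 2 := Fin.ext (by have := j'.isLt; omega)
  subst hj2
  exact h2

end StepSec

section StepMain

variable {K : Type} [Field K] {N : ℕ}

lemma count_stepP {N : ℕ} (x a' c' m' b' : Fin N) (mid' : List (Fin N)) :
    List.count x (c' :: (mid' ++ [b'])) + ((if x = a' then 1 else 0) + (if x = m' then 1 else 0))
      = List.count x (a' :: ((c' :: m' :: mid') ++ [b'])) := by
  simp only [List.count_cons, List.count_append, List.count_nil, beq_iff_eq]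
  split_ifs <;> omega

lemma count_stepQ {N : ℕ} (x a' c' m' b' : Fin N) (mid' : List (Fin N)) :
    List.count x (a' :: (mid' ++ [b'])) + ((if x = c' then 1 else 0) + (if x = m' then 1 else 0))
      = List.count x (a' :: ((c' :: m' :: mid') ++ [b'])) := by
  simp only [List.count_cons, List.count_append, List.count_nil, beq_iff_eq]
  split_ifs <;> omega

set_option maxHeartbeats 2000000 in
lemma CL_step (a c m0 b : Fin N) (mid' : List (Fin N))
    (hch : List.Chain' (· < ·) (a :: c :: m0 :: (mid' ++ [b])))
    (P Q : MvPolynomial (Fin N × Fin 3) K)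
    (hP : Good K N c mid' b P) (hQ : Good K N a mid' b Q) :
    Good K N a (c :: m0 :: mid') b (P * Gpair K N a m0 - Q * Gpair K N c m0) ∧
    MvPolynomial.coeff (mon2E a c (m0 :: mid') b) (P * Gpair K N a m0 - Q * Gpair K N c m0) = -1 ∧
    ∀ m ∈ (P * Gpair K N a m0 - Q * Gpair K N c m0).support,
      m ≠ leadE a (c :: m0 :: mid') b → m ≠ mon2E a c (m0 :: mid') b →
      monLT m (mon2E a c (m0 :: mid') b) := by
  obtain ⟨hP1, hP2, hP3⟩ := hP
  obtain ⟨hQ1, hQ2, hQ3⟩ := hQ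
  replace hch := List.isChain_iff_pairwise.1 hch
  obtain ⟨ha, hch⟩ := List.pairwise_cons.1 hch
  obtain ⟨hc, hch⟩ := List.pairwise_cons.1 hch
  obtain ⟨hm, hch⟩ := List.pairwise_cons.1 hch
  have hac : a < c := ha c (by simp)
  have ham : a < m0 := ha m0 (by simp)
  have hab : a < b := ha b (by simp)
  have hcm : c < m0 := hc m0 (by simp)
  have hcb : c < b := hc b (by simp)
  have hmb : m0 < b := hm b (by simp)
  have hamid : ∀ x ∈ mid', a < x := fun x hx => ha x (by simp [hx])
  have hcmid : ∀ x ∈ mid', c < x := fun x hx => hc x (by simp [hx])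
  have hmmid : ∀ x ∈ mid', m0 < x := fun x hx => hm x (by simp [hx])
  have hanm : a ∉ mid' := fun h => lt_irrefl a (hamid a h)
  have hcnm : c ∉ mid' := fun h => lt_irrefl c (hcmid c h)
  have hmnm : m0 ∉ mid' := fun h => lt_irrefl m0 (hmmid m0 h)
  have cA : List.count a mid' = 0 := List.count_eq_zero.2 hanm
  have cC : List.count c mid' = 0 := List.count_eq_zero.2 hcnm
  have cM : List.count m0 mid' = 0 := List.count_eq_zero.2 hmnm
  have hac' : a ≠ c := ne_of_lt hac
  have hca' : c ≠ a := hac'.symm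
  have ham' : a ≠ m0 := ne_of_lt ham
  have hma' : m0 ≠ a := ham'.symm
  have hab' : a ≠ b := ne_of_lt hab
  have hba' : b ≠ a := hab'.symm
  have hcm' : c ≠ m0 := ne_of_lt hcm
  have hmc' : m0 ≠ c := hcm'.symm
  have hcb' : c ≠ b := ne_of_lt hcb
  have hbc' : b ≠ c := hcb'.symm
  have hmb' : m0 ≠ b := ne_of_lt hmb
  have hbm' : b ≠ m0 := hmb'.symm
  have vac : (a : ℕ) < c := Fin.lt_def.1 hac
  have vam : (a : ℕ) < m0 := Fin.lt_def.1 ham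
  have vcm : (c : ℕ) < m0 := Fin.lt_def.1 hcm
  have vmb : (m0 : ℕ) < b := Fin.lt_def.1 hmb
  have hLl : leadE a (c :: m0 :: mid') b
      = leadE a mid' b + (Finsupp.single ((c,1) : Fin N × Fin 3) (1:ℕ) + Finsupp.single ((m0,1) : Fin N × Fin 3) (1:ℕ)) := by
    simp only [leadE, Ymon_cons]; abel
  have hM2 : mon2E a c (m0 :: mid') b
      = leadE c mid' b + (Finsupp.single ((a,1) : Fin N × Fin 3) (1:ℕ) + Finsupp.single ((m0,1) : Fin N × Fin 3) (1:ℕ)) := by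
    simp only [leadE, mon2E, Ymon_cons]; abel
  have hMf : leadE c mid' b + (Finsupp.single ((a,0) : Fin N × Fin 3) (1:ℕ) + Finsupp.single ((m0,2) : Fin N × Fin 3) (1:ℕ))
      = leadE a mid' b + (Finsupp.single ((c,0) : Fin N × Fin 3) (1:ℕ) + Finsupp.single ((m0,2) : Fin N × Fin 3) (1:ℕ)) := by
    simp only [leadE]; abel
  have hL1 : ¬((Finsupp.single ((a,0) : Fin N × Fin 3) (1:ℕ) + Finsupp.single ((m0,2) : Fin N × Fin 3) (1:ℕ)) ≤ leadE a (c :: m0 :: mid') b) :=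
    not_le_at (m0,2) (by simp [leadE, Finsupp.add_apply, Finsupp.single_apply, Ymon_apply, Ymon_cons, List.count_cons, List.count_nil, List.count_append, cA, cC, cM, hac', hca', ham', hma', hab', hba', hcm', hmc', hcb', hbc', hmb', hbm'])
  have hL2 : ¬((Finsupp.single ((a,1) : Fin N × Fin 3) (1:ℕ) + Finsupp.single ((m0,1) : Fin N × Fin 3) (1:ℕ)) ≤ leadE a (c :: m0 :: mid') b) :=
    not_le_at (a,1) (by simp [leadE, Finsupp.add_apply, Finsupp.single_apply, Ymon_apply, Ymon_cons, List.count_cons, List.count_nil, List.count_append, cA, cC, cM, hac', hca', ham', hma', hab', hba', hcm', hmc', hcb', hbc', hmb', hbm'])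
  have hL3 : ¬((Finsupp.single ((a,2) : Fin N × Fin 3) (1:ℕ) + Finsupp.single ((m0,0) : Fin N × Fin 3) (1:ℕ)) ≤ leadE a (c :: m0 :: mid') b) :=
    not_le_at (a,2) (by simp [leadE, Finsupp.add_apply, Finsupp.single_apply, Ymon_apply, Ymon_cons, List.count_cons, List.count_nil, List.count_append, cA, cC, cM, hac', hca', ham', hma', hab', hba', hcm', hmc', hcb', hbc', hmb', hbm'])
  have hL4 : ¬((Finsupp.single ((c,0) : Fin N × Fin 3) (1:ℕ) + Finsupp.single ((m0,2) : Fin N × Fin 3) (1:ℕ)) ≤ leadE a (c :: m0 :: mid') b) :=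
    not_le_at (c,0) (by simp [leadE, Finsupp.add_apply, Finsupp.single_apply, Ymon_apply, Ymon_cons, List.count_cons, List.count_nil, List.count_append, cA, cC, cM, hac', hca', ham', hma', hab', hba', hcm', hmc', hcb', hbc', hmb', hbm'])
  have hL6 : ¬((Finsupp.single ((c,2) : Fin N × Fin 3) (1:ℕ) + Finsupp.single ((m0,0) : Fin N × Fin 3) (1:ℕ)) ≤ leadE a (c :: m0 :: mid') b) :=
    not_le_at (c,2) (by simp [leadE, Finsupp.add_apply, Finsupp.single_apply, Ymon_apply, Ymon_cons, List.count_cons, List.count_nil, List.count_append, cA, cC, cM, hac', hca', ham', hma', hab', hba', hcm', hmc', hcb', hbc', hmb', hbm'])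

  have hN1 : ¬((Finsupp.single ((a,0) : Fin N × Fin 3) (1:ℕ) + Finsupp.single ((m0,2) : Fin N × Fin 3) (1:ℕ)) ≤ mon2E a c (m0 :: mid') b) :=
    not_le_at (a,0) (by simp [mon2E, Finsupp.add_apply, Finsupp.single_apply, Ymon_apply, Ymon_cons, List.count_cons, List.count_nil, List.count_append, cA, cC, cM, hac', hca', ham', hma', hab', hba', hcm', hmc', hcb', hbc', hmb', hbm'])
  have hN3 : ¬((Finsupp.single ((a,2) : Fin N × Fin 3) (1:ℕ) + Finsupp.single ((m0,0) : Fin N × Fin 3) (1:ℕ)) ≤ mon2E a c (m0 :: mid') b) :=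
    not_le_at (a,2) (by simp [mon2E, Finsupp.add_apply, Finsupp.single_apply, Ymon_apply, Ymon_cons, List.count_cons, List.count_nil, List.count_append, cA, cC, cM, hac', hca', ham', hma', hab', hba', hcm', hmc', hcb', hbc', hmb', hbm'])
  have hN4 : ¬((Finsupp.single ((c,0) : Fin N × Fin 3) (1:ℕ) + Finsupp.single ((m0,2) : Fin N × Fin 3) (1:ℕ)) ≤ mon2E a c (m0 :: mid') b) :=
    not_le_at (m0,2) (by simp [mon2E, Finsupp.add_apply, Finsupp.single_apply, Ymon_apply, Ymon_cons, List.count_cons, List.count_nil, List.count_append, cA, cC, cM, hac', hca', ham', hma', hab', hba', hcm', hmc', hcb', hbc', hmb', hbm'])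
  have hN5 : ¬((Finsupp.single ((c,1) : Fin N × Fin 3) (1:ℕ) + Finsupp.single ((m0,1) : Fin N × Fin 3) (1:ℕ)) ≤ mon2E a c (m0 :: mid') b) :=
    not_le_at (c,1) (by simp [mon2E, Finsupp.add_apply, Finsupp.single_apply, Ymon_apply, Ymon_cons, List.count_cons, List.count_nil, List.count_append, cA, cC, cM, hac', hca', ham', hma', hab', hba', hcm', hmc', hcb', hbc', hmb', hbm'])
  have hN6 : ¬((Finsupp.single ((c,2) : Fin N × Fin 3) (1:ℕ) + Finsupp.single ((m0,0) : Fin N × Fin 3) (1:ℕ)) ≤ mon2E a c (m0 :: mid') b) :=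
    not_le_at (c,2) (by simp [mon2E, Finsupp.add_apply, Finsupp.single_apply, Ymon_apply, Ymon_cons, List.count_cons, List.count_nil, List.count_append, cA, cC, cM, hac', hca', ham', hma', hab', hba', hcm', hmc', hcb', hbc', hmb', hbm'])

  have hK2 : ¬((Finsupp.single ((a,1) : Fin N × Fin 3) (1:ℕ) + Finsupp.single ((m0,1) : Fin N × Fin 3) (1:ℕ)) ≤ leadE c mid' b + (Finsupp.single ((a,0) : Fin N × Fin 3) (1:ℕ) + Finsupp.single ((m0,2) : Fin N × Fin 3) (1:ℕ))) :=
    not_le_at (a,1) (by simp [leadE, Finsupp.add_apply, Finsupp.single_apply, Ymon_apply, Ymon_cons, List.count_cons, List.count_nil, List.count_append, cA, cC, cM, hac', hca', ham', hma', hab', hba', hcm', hmc', hcb', hbc', hmb', hbm'])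
  have hK3 : ¬((Finsupp.single ((a,2) : Fin N × Fin 3) (1:ℕ) + Finsupp.single ((m0,0) : Fin N × Fin 3) (1:ℕ)) ≤ leadE c mid' b + (Finsupp.single ((a,0) : Fin N × Fin 3) (1:ℕ) + Finsupp.single ((m0,2) : Fin N × Fin 3) (1:ℕ))) :=
    not_le_at (a,2) (by simp [leadE, Finsupp.add_apply, Finsupp.single_apply, Ymon_apply, Ymon_cons, List.count_cons, List.count_nil, List.count_append, cA, cC, cM, hac', hca', ham', hma', hab', hba', hcm', hmc', hcb', hbc', hmb', hbm'])
  have hK5 : ¬((Finsupp.single ((c,1) : Fin N × Fin 3) (1:ℕ) + Finsupp.single ((m0,1) : Fin N × Fin 3) (1:ℕ)) ≤ leadE c mid' b + (Finsupp.single ((a,0) : Fin N × Fin 3) (1:ℕ) + Finsupp.single ((m0,2) : Fin N × Fin 3) (1:ℕ))) :=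
    not_le_at (c,1) (by simp [leadE, Finsupp.add_apply, Finsupp.single_apply, Ymon_apply, Ymon_cons, List.count_cons, List.count_nil, List.count_append, cA, cC, cM, hac', hca', ham', hma', hab', hba', hcm', hmc', hcb', hbc', hmb', hbm'])
  have hK6 : ¬((Finsupp.single ((c,2) : Fin N × Fin 3) (1:ℕ) + Finsupp.single ((m0,0) : Fin N × Fin 3) (1:ℕ)) ≤ leadE c mid' b + (Finsupp.single ((a,0) : Fin N × Fin 3) (1:ℕ) + Finsupp.single ((m0,2) : Fin N × Fin 3) (1:ℕ))) :=
    not_le_at (c,2) (by simp [leadE, Finsupp.add_apply, Finsupp.single_apply, Ymon_apply, Ymon_cons, List.count_cons, List.count_nil, List.count_append, cA, cC, cM, hac', hca', ham', hma', hab', hba', hcm', hmc', hcb', hbc', hmb', hbm'])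

  have hcoefflead : MvPolynomial.coeff (leadE a (c :: m0 :: mid') b) (P * Gpair K N a m0 - Q * Gpair K N c m0) = 1 := by
    rw [coeff_sub, coeff_mul_Gpair, coeff_mul_Gpair,
      if_neg hL1, if_neg hL2, if_neg hL3, if_neg hL4, if_neg hL6,
      hLl, if_pos le_add_self, add_tsub_cancel_right, hQ1]
    ring
  have hcoeffmon2 : MvPolynomial.coeff (mon2E a c (m0 :: mid') b) (P * Gpair K N a m0 - Q * Gpair K N c m0) = -1 := by
    rw [coeff_sub, coeff_mul_Gpair, coeff_mul_Gpair,
      if_neg hN1, if_neg hN3, if_neg hN4, if_neg hN5, if_neg hN6,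
      hM2, if_pos le_add_self, add_tsub_cancel_right, hP1]
    ring
  have hMcoeff : MvPolynomial.coeff (leadE c mid' b + (Finsupp.single ((a,0) : Fin N × Fin 3) (1:ℕ) + Finsupp.single ((m0,2) : Fin N × Fin 3) (1:ℕ))) (P * Gpair K N a m0 - Q * Gpair K N c m0) = 0 := by
    rw [coeff_sub, coeff_mul_Gpair, coeff_mul_Gpair,
      if_neg hK2, if_neg hK3, if_neg hK5, if_neg hK6,
      if_pos le_add_self, add_tsub_cancel_right, hP1,
      hMf, if_pos le_add_self, add_tsub_cancel_right, hQ1]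
    ring
  have hsupp : ∀ m ∈ (P * Gpair K N a m0 - Q * Gpair K N c m0).support,
      (∃ mP ∈ P.support, m = mP + (Finsupp.single ((a,0) : Fin N × Fin 3) (1:ℕ) + Finsupp.single ((m0,2) : Fin N × Fin 3) (1:ℕ)) ∨ m = mP + (Finsupp.single ((a,1) : Fin N × Fin 3) (1:ℕ) + Finsupp.single ((m0,1) : Fin N × Fin 3) (1:ℕ)) ∨ m = mP + (Finsupp.single ((a,2) : Fin N × Fin 3) (1:ℕ) + Finsupp.single ((m0,0) : Fin N × Fin 3) (1:ℕ))) ∨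
      (∃ mQ ∈ Q.support, m = mQ + (Finsupp.single ((c,0) : Fin N × Fin 3) (1:ℕ) + Finsupp.single ((m0,2) : Fin N × Fin 3) (1:ℕ)) ∨ m = mQ + (Finsupp.single ((c,1) : Fin N × Fin 3) (1:ℕ) + Finsupp.single ((m0,1) : Fin N × Fin 3) (1:ℕ)) ∨ m = mQ + (Finsupp.single ((c,2) : Fin N × Fin 3) (1:ℕ) + Finsupp.single ((m0,0) : Fin N × Fin 3) (1:ℕ))) := by
    intro m hm
    rcases Finset.mem_union.1 (MvPolynomial.support_sub _ _ _ hm) with h | h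
    · exact Or.inl (support_mul_Gpair K N P a m0 m h)
    · exact Or.inr (support_mul_Gpair K N Q c m0 m h)
  have hvan : ∀ (y z : Fin N) (j1 j2 : Fin 3), (y:ℕ) ≤ (m0:ℕ) → (z:ℕ) ≤ (m0:ℕ) →
      ∀ w : Fin N × Fin 3, (m0:ℕ) < (w.1:ℕ) →
      ((Finsupp.single ((y,j1) : Fin N × Fin 3) 1
        + Finsupp.single ((z,j2) : Fin N × Fin 3) 1 : (Fin N × Fin 3) →₀ ℕ)) w = 0 := by
    intro y z j1 j2 hy hz w hw
    have hwy : w.1 ≠ y := Fin.ne_of_val_ne (by omega)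
    have hwz : w.1 ≠ z := Fin.ne_of_val_ne (by omega)
    simp [Finsupp.add_apply, single_apply_fst_ne hwy, single_apply_fst_ne hwz]
  have hSTP : ∀ w : Fin N × Fin 3, (m0:ℕ) < (w.1:ℕ) →
      leadE c mid' b w = mon2E a c (m0 :: mid') b w := by
    intro w hw
    have hwa : w.1 ≠ a := Fin.ne_of_val_ne (by omega)
    have hwc : w.1 ≠ c := Fin.ne_of_val_ne (by omega)
    have hwm : w.1 ≠ m0 := Fin.ne_of_val_ne (by omega)
    simp [leadE, mon2E, Ymon_cons, Finsupp.add_apply,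
      single_apply_fst_ne hwa, single_apply_fst_ne hwc, single_apply_fst_ne hwm]
  have hSTQ : ∀ w : Fin N × Fin 3, (m0:ℕ) < (w.1:ℕ) →
      leadE a mid' b w = mon2E a c (m0 :: mid') b w := by
    intro w hw
    have hwa : w.1 ≠ a := Fin.ne_of_val_ne (by omega)
    have hwc : w.1 ≠ c := Fin.ne_of_val_ne (by omega)
    have hwm : w.1 ≠ m0 := Fin.ne_of_val_ne (by omega)
    simp [leadE, mon2E, Ymon_cons, Finsupp.add_apply,
      single_apply_fst_ne hwa, single_apply_fst_ne hwc, single_apply_fst_ne hwm]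
  have hwitP : ∀ mP ∈ P.support, mP ≠ leadE c mid' b →
      ∃ v, mP v < leadE c mid' b v ∧
        (∀ w, rankVar v < rankVar w → mP w = leadE c mid' b w) ∧ (m0:ℕ) < (v.1:ℕ) := by
    intro mP hmP hne
    obtain ⟨v, h1, h2, h3⟩ := good_witness hcnm hcb'
      (by rw [hP2 mP hmP c]
          simp [List.count_cons, List.count_append, List.count_nil, cC, hcb', hbc'])
      (hP3 mP hmP hne)
    refine ⟨v, h1, h2, ?_⟩
    rcases h3 with h | h
    · exact Fin.lt_def.1 (hmmid _ h)
    · rw [h]; exact vmb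
  have hwitQ : ∀ mQ ∈ Q.support, mQ ≠ leadE a mid' b →
      ∃ v, mQ v < leadE a mid' b v ∧
        (∀ w, rankVar v < rankVar w → mQ w = leadE a mid' b w) ∧ (m0:ℕ) < (v.1:ℕ) := by
    intro mQ hmQ hne
    obtain ⟨v, h1, h2, h3⟩ := good_witness hanm hab'
      (by rw [hQ2 mQ hmQ a]
          simp [List.count_cons, List.count_append, List.count_nil, cA, hab', hba'])
      (hQ3 mQ hmQ hne)
    refine ⟨v, h1, h2, ?_⟩
    rcases h3 with h | h
    · exact Fin.lt_def.1 (hmmid _ h)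
    · rw [h]; exact vmb
  have h4 : ∀ m ∈ (P * Gpair K N a m0 - Q * Gpair K N c m0).support,
      m ≠ leadE a (c :: m0 :: mid') b → m ≠ mon2E a c (m0 :: mid') b →
      monLT m (mon2E a c (m0 :: mid') b) := by
    intro m hm hne1 hne2
    rcases hsupp m hm with ⟨mP, hmP, hcase⟩ | ⟨mQ, hmQ, hcase⟩
    · rcases hcase with rfl | rfl | rfl
      · rcases eq_or_ne mP (leadE c mid' b) with rfl | hnemP
        · exact absurd hMcoeff (MvPolynomial.mem_support_iff.1 hm)
        · obtain ⟨v, h1, h2, h3⟩ := hwitP mP hmP hnemP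
          exact monLT_high m0 v h1 h2 h3 (hvan a m0 0 2 vam.le le_rfl) hSTP
      · rcases eq_or_ne mP (leadE c mid' b) with rfl | hnemP
        · exact absurd hM2.symm hne2
        · rw [hM2]
          exact monLT_add_right (hP3 mP hmP hnemP) _
      · rcases eq_or_ne mP (leadE c mid' b) with rfl | hnemP
        · refine monLT_at_m0 m0 ?_ ?_ ?_ ?_
          · simp [leadE, Finsupp.add_apply, Finsupp.single_apply, Ymon_apply, Ymon_cons, List.count_cons, List.count_nil, List.count_append, cA, cC, cM, hac', hca', ham', hma', hab', hba', hcm', hmc', hcb', hbc', hmb', hbm']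
          · simp [mon2E, Finsupp.add_apply, Finsupp.single_apply, Ymon_apply, Ymon_cons, List.count_cons, List.count_nil, List.count_append, cA, cC, cM, hac', hca', ham', hma', hab', hba', hcm', hmc', hcb', hbc', hmb', hbm']
          · simp [leadE, mon2E, Finsupp.add_apply, Finsupp.single_apply, Ymon_apply, Ymon_cons, List.count_cons, List.count_nil, List.count_append, cA, cC, cM, hac', hca', ham', hma', hab', hba', hcm', hmc', hcb', hbc', hmb', hbm']
          · intro w hw
            rw [Finsupp.add_apply, hvan a m0 2 0 vam.le le_rfl w hw, add_zero, hSTP w hw]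
        · obtain ⟨v, h1, h2, h3⟩ := hwitP mP hmP hnemP
          exact monLT_high m0 v h1 h2 h3 (hvan a m0 2 0 vam.le le_rfl) hSTP
    · rcases hcase with rfl | rfl | rfl
      · rcases eq_or_ne mQ (leadE a mid' b) with rfl | hnemQ
        · refine absurd ?_ (MvPolynomial.mem_support_iff.1 hm)
          rw [← hMf]
          exact hMcoeff
        · obtain ⟨v, h1, h2, h3⟩ := hwitQ mQ hmQ hnemQ
          exact monLT_high m0 v h1 h2 h3 (hvan c m0 0 2 vcm.le le_rfl) hSTQ
      · rcases eq_or_ne mQ (leadE a mid' b) with rfl | hnemQ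
        · exact absurd hLl.symm hne1
        · obtain ⟨v, h1, h2, h3⟩ := hwitQ mQ hmQ hnemQ
          exact monLT_high m0 v h1 h2 h3 (hvan c m0 1 1 vcm.le le_rfl) hSTQ
      · rcases eq_or_ne mQ (leadE a mid' b) with rfl | hnemQ
        · refine monLT_at_m0 m0 ?_ ?_ ?_ ?_
          · simp [leadE, Finsupp.add_apply, Finsupp.single_apply, Ymon_apply, Ymon_cons, List.count_cons, List.count_nil, List.count_append, cA, cC, cM, hac', hca', ham', hma', hab', hba', hcm', hmc', hcb', hbc', hmb', hbm']
          · simp [mon2E, Finsupp.add_apply, Finsupp.single_apply, Ymon_apply, Ymon_cons, List.count_cons, List.count_nil, List.count_append, cA, cC, cM, hac', hca', ham', hma', hab', hba', hcm', hmc', hcb', hbc', hmb', hbm']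
          · simp [leadE, mon2E, Finsupp.add_apply, Finsupp.single_apply, Ymon_apply, Ymon_cons, List.count_cons, List.count_nil, List.count_append, cA, cC, cM, hac', hca', ham', hma', hab', hba', hcm', hmc', hcb', hbc', hmb', hbm']
          · intro w hw
            rw [Finsupp.add_apply, hvan c m0 2 0 vcm.le le_rfl w hw, add_zero, hSTQ w hw]
        · obtain ⟨v, h1, h2, h3⟩ := hwitQ mQ hmQ hnemQ
          exact monLT_high m0 v h1 h2 h3 (hvan c m0 2 0 vcm.le le_rfl) hSTQ
  have hlt4 : monLT (mon2E a c (m0 :: mid') b) (leadE a (c :: m0 :: mid') b) := by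
    refine mon2_lt_lead a c b (m0 :: mid') hac ?_ hcb
    intro x hx
    rcases List.mem_cons.1 hx with rfl | hx'
    · exact hcm
    · exact hcmid x hx'
  refine ⟨⟨hcoefflead, ?_, good3_of hlt4 h4⟩, hcoeffmon2, h4⟩
  intro m hm x
  rcases hsupp m hm with ⟨mP, hmP, hcase⟩ | ⟨mQ, hmQ, hcase⟩
  · rcases hcase with rfl | rfl | rfl <;>
      · rw [degAt_add, hP2 mP hmP x, degAt_add, degAt_single, degAt_single]
        exact count_stepP x a c m0 b mid'
  · rcases hcase with rfl | rfl | rfl <;>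
      · rw [degAt_add, hQ2 mQ hmQ x, degAt_add, degAt_single, degAt_single]
        exact count_stepQ x a c m0 b mid'

end StepMain

section CLSec

variable {K : Type} [Field K] {N : ℕ}

lemma CL : ∀ (n : ℕ) (mid : List (Fin N)), mid.length ≤ n → ∀ a c b : Fin N,
    List.Chain' (· < ·) (a :: c :: (mid ++ [b])) →
    Good K N a (c :: mid) b (GG K N (a :: c :: (mid ++ [b]))) ∧
    MvPolynomial.coeff (mon2E a c mid b) (GG K N (a :: c :: (mid ++ [b]))) = -1 ∧
    ∀ m ∈ (GG K N (a :: c :: (mid ++ [b]))).support,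
      m ≠ leadE a (c :: mid) b → m ≠ mon2E a c mid b → monLT m (mon2E a c mid b) := by
  intro n
  induction n with
  | zero =>
    intro mid hlen a c b hch
    obtain rfl : mid = [] := List.length_eq_zero_iff.1 (Nat.le_zero.1 hlen)
    exact CL_base a c b hch
  | succ n ih =>
    intro mid hlen a c b hch
    rcases mid with _ | ⟨m0, mid'⟩
    · exact CL_base a c b hch
    · have hch' : List.Chain' (· < ·) (a :: c :: m0 :: (mid' ++ [b])) := hch
      have hGG : GG K N (a :: c :: m0 :: (mid' ++ [b]))
          = GG K N (c :: (mid' ++ [b])) * Gpair K N a m0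
            - GG K N (a :: (mid' ++ [b])) * Gpair K N c m0 := by
        obtain ⟨x, r, hxr⟩ : ∃ x r, mid' ++ [b] = x :: r := by
          cases mid' with
          | nil => exact ⟨b, [], rfl⟩
          | cons m1 mid'' => exact ⟨m1, mid'' ++ [b], rfl⟩
        rw [hxr]
        simp [GG]
      have hpw := List.isChain_iff_pairwise.1 hch'
      have hsubP : (c :: (mid' ++ [b])).Sublist (a :: c :: m0 :: (mid' ++ [b])) :=
        (((List.sublist_cons_self m0 (mid' ++ [b])).cons₂ c)).cons a
      have hsubQ : (a :: (mid' ++ [b])).Sublist (a :: c :: m0 :: (mid' ++ [b])) :=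
        (((List.sublist_cons_self m0 (mid' ++ [b])).cons c)).cons₂ a
      have hchP : List.Chain' (· < ·) (c :: (mid' ++ [b])) :=
        List.isChain_iff_pairwise.2 (hpw.sublist hsubP)
      have hchQ : List.Chain' (· < ·) (a :: (mid' ++ [b])) :=
        List.isChain_iff_pairwise.2 (hpw.sublist hsubQ)
      have hP : Good K N c mid' b (GG K N (c :: (mid' ++ [b]))) := by
        cases mid' with
        | nil =>
          have hgg : GG K N (c :: ([] ++ [b])) = Gpair K N c b := by simp [GG]
          rw [hgg]
          have hcb : c < b := (List.isChain_cons_cons.1 hchP).1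
          exact Good_pair K N c b hcb
        | cons m1 mid'' =>
          exact (ih mid'' (by simp at hlen ⊢; omega) c m1 b hchP).1
      have hQ : Good K N a mid' b (GG K N (a :: (mid' ++ [b]))) := by
        cases mid' with
        | nil =>
          have hgg : GG K N (a :: ([] ++ [b])) = Gpair K N a b := by simp [GG]
          rw [hgg]
          have hab : a < b := (List.isChain_cons_cons.1 hchQ).1
          exact Good_pair K N a b hab
        | cons m1 mid'' =>
          exact (ih mid'' (by simp at hlen ⊢; omega) a m1 b hchQ).1
      have hmain := CL_step a c m0 b mid' hch' _ _ hP hQ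
      simp only [List.cons_append] at hGG ⊢
      rw [hGG]
      exact hmain

end CLSec

/-- with the lex order Z_N > Y_N > X_N > ⋯ > Z₁ > Y₁ > X₁, for
i₁ < i₂ < ⋯ < i_t (t ≥ 3, here l = a :: c :: mid ++ [b]),
G_l = X_{i₁} Y_{i₂} ⋯ Y_{i_{t-1}} Z_{i_t} - Y_{i₁} X_{i₂} Y_{i₃} ⋯ Y_{i_{t-1}} Z_{i_t}
+ lower order terms; in particular the leading monomial of G_l is
X_{i₁} Y_{i₂} ⋯ Y_{i_{t-1}} Z_{i_t}. -/
theorem GG_leading_terms (K : Type) [Field K] [CharZero K] (N : ℕ)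
    (a c b : Fin N) (mid : List (Fin N))
    (hchain : (a :: c :: (mid ++ [b])).Chain' (· < ·)) :
    MvPolynomial.coeff
        (Finsupp.single ((a, 0) : Fin N × Fin 3) 1 + Finsupp.single ((c, 1) : Fin N × Fin 3) 1
          + Ymon mid + Finsupp.single ((b, 2) : Fin N × Fin 3) 1)
        (GG K N (a :: c :: (mid ++ [b]))) = 1 ∧
    MvPolynomial.coeff
        (Finsupp.single ((a, 1) : Fin N × Fin 3) 1 + Finsupp.single ((c, 0) : Fin N × Fin 3) 1
          + Ymon mid + Finsupp.single ((b, 2) : Fin N × Fin 3) 1)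
        (GG K N (a :: c :: (mid ++ [b]))) = -1 ∧
    monLT (Finsupp.single ((a, 1) : Fin N × Fin 3) 1 + Finsupp.single ((c, 0) : Fin N × Fin 3) 1
            + Ymon mid + Finsupp.single ((b, 2) : Fin N × Fin 3) 1)
          (Finsupp.single ((a, 0) : Fin N × Fin 3) 1 + Finsupp.single ((c, 1) : Fin N × Fin 3) 1
            + Ymon mid + Finsupp.single ((b, 2) : Fin N × Fin 3) 1) ∧
    ∀ m ∈ (GG K N (a :: c :: (mid ++ [b]))).support,
      m ≠ Finsupp.single ((a, 0) : Fin N × Fin 3) 1 + Finsupp.single ((c, 1) : Fin N × Fin 3) 1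
            + Ymon mid + Finsupp.single ((b, 2) : Fin N × Fin 3) 1 →
      m ≠ Finsupp.single ((a, 1) : Fin N × Fin 3) 1 + Finsupp.single ((c, 0) : Fin N × Fin 3) 1
            + Ymon mid + Finsupp.single ((b, 2) : Fin N × Fin 3) 1 →
      monLT m (Finsupp.single ((a, 1) : Fin N × Fin 3) 1
                + Finsupp.single ((c, 0) : Fin N × Fin 3) 1 + Ymon mid
                + Finsupp.single ((b, 2) : Fin N × Fin 3) 1) := by
  obtain ⟨⟨h1, -, -⟩, h2, h4⟩ := CL (K := K) (N := N) mid.length mid le_rfl a c b hchain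
  have hL : leadE a (c :: mid) b
      = Finsupp.single ((a, 0) : Fin N × Fin 3) 1 + Finsupp.single ((c, 1) : Fin N × Fin 3) 1
          + Ymon mid + Finsupp.single ((b, 2) : Fin N × Fin 3) 1 := by
    simp only [leadE, Ymon_cons]; abel
  have hM : mon2E a c mid b
      = Finsupp.single ((a, 1) : Fin N × Fin 3) 1 + Finsupp.single ((c, 0) : Fin N × Fin 3) 1
          + Ymon mid + Finsupp.single ((b, 2) : Fin N × Fin 3) 1 := rfl
  have hpw := List.isChain_iff_pairwise.1 hchain
  obtain ⟨ha, hpw⟩ := List.pairwise_cons.1 hpw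
  obtain ⟨hc, hpw⟩ := List.pairwise_cons.1 hpw
  have hac : a < c := ha c (by simp)
  have hcb : c < b := hc b (by simp)
  have hcmid : ∀ x ∈ mid, c < x := fun x hx => hc x (by simp [hx])
  refine ⟨by rw [← hL]; exact h1, by rw [← hM]; exact h2, ?_, ?_⟩
  · rw [← hL, ← hM]
    exact mon2_lt_lead a c b mid hac hcmid hcb
  · intro m hm hna hnb
    rw [← hM]
    exact h4 m hm (by rw [hL]; exact hna) (by rw [hM]; exact hnb)
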